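/- Corollary (Strong global robustness of SM-NLMS). Assume the noise is bounded by a known constant B ≥ 0, i.e., |n(k)| ≤ B for all k, and that the threshold satisfies γ̄ ≥ 2B. Then for every K ∈ ℕ, ‖w_o − w(K)‖ ≤ ‖w_o − w(0)‖. -/

import Mathlib

open RealInnerProductSpace

/-- strong global robustness of the SM-NLMS algorithm: if the noise is
bounded by a known constant `B` and the threshold satisfies `γ ≥ 2B`, then the sequence
of coefficient deviations never exceeds the initial deviation. -/
theorem sm_nlms_strong_global_robustness (N : ℕ)
    (w_o : EuclideanSpace ℝ (Fin (N + 1)))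
    (x : ℕ → EuclideanSpace ℝ (Fin (N + 1))) (n : ℕ → ℝ) (δ γ B : ℝ)
    (hδ : 0 < δ) (hγ0 : 0 ≤ γ) (hB : 0 ≤ B)
    (hn : ∀ k, |n k| ≤ B) (hγ : 2 * B ≤ γ)
    (w : ℕ → EuclideanSpace ℝ (Fin (N + 1)))
    (d e et α μb : ℕ → ℝ)
    (hd : ∀ k, d k = ⟪w_o, x k⟫ + n k)
    (he : ∀ k, e k = d k - ⟪w k, x k⟫)
    (het : ∀ k, et k = ⟪w_o - w k, x k⟫)
    (hα : ∀ k, α k = ‖x k‖ ^ 2 + δ)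
    (hμ : ∀ k, μb k = 1 - γ / |e k|)
    (hupd : ∀ k, w (k + 1) =
      if γ < |e k| then w k + ((μb k / α k) * e k) • x k else w k) :
    ∀ K, ‖w_o - w K‖ ≤ ‖w_o - w 0‖ := by
  have step : ∀ k, ‖w_o - w (k + 1)‖ ≤ ‖w_o - w k‖ := by
    intro k
    rw [hupd k]
    split_ifs with hE
    · -- update case
      set v := w_o - w k with hv
      set c := μb k / α k * e k with hc
      have hsub : w_o - (w k + c • x k) = v - c • x k := by
        rw [hv]; abel
      rw [hsub]
      have hepos : 0 < |e k| := lt_of_le_of_lt hγ0 hE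
      have hene : e k ≠ 0 := abs_pos.mp hepos
      have hA : 0 < α k := by
        rw [hα]; positivity
      have hXA : ‖x k‖ ^ 2 ≤ α k := by rw [hα]; linarith
      have hen : e k * n k ≤ |e k| * B := by
        calc e k * n k ≤ |e k * n k| := le_abs_self _
        _ = |e k| * |n k| := abs_mul _ _
        _ ≤ |e k| * B := by
            exact mul_le_mul_of_nonneg_left (hn k) (abs_nonneg _)
      have habs : |e k| ^ 2 = e k ^ 2 := sq_abs _
      have het' : et k = e k - n k := by
        rw [het, he, hd, inner_sub_left]; ring
      have hm0 : 0 ≤ μb k := by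
        rw [hμ]
        have : γ / |e k| ≤ 1 := (div_le_one hepos).mpr hE.le
        linarith
      have hme : μb k * |e k| = |e k| - γ := by
        rw [hμ]; field_simp
      have h1 : μb k * e k ^ 2 ≤ 2 * e k * et k := by
        rw [het']
        nlinarith [mul_le_mul_of_nonneg_left hme.le hepos.le, sq_nonneg (e k),
          mul_nonneg hepos.le hγ0]
      have hkey : c ^ 2 * ‖x k‖ ^ 2 ≤ 2 * c * et k := by
        have hceq : c * α k = μb k * e k := by
          rw [hc]; field_simp
        have h2 : c ^ 2 * ‖x k‖ ^ 2 ≤ c ^ 2 * α k := by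
          exact mul_le_mul_of_nonneg_left hXA (sq_nonneg c)
        have h3 : c ^ 2 * α k = (μb k / α k) * (μb k * e k ^ 2) := by
          rw [hc]; field_simp
        have h4 : (μb k / α k) * (μb k * e k ^ 2) ≤ (μb k / α k) * (2 * e k * et k) :=
          mul_le_mul_of_nonneg_left h1 (div_nonneg hm0 hA.le)
        have h5 : (μb k / α k) * (2 * e k * et k) = 2 * c * et k := by
          rw [hc]; ring
        linarith
      have hsq : ‖v - c • x k‖ ^ 2 ≤ ‖v‖ ^ 2 := by
        have := @norm_sub_sq_real (EuclideanSpace ℝ (Fin (N+1))) _ _ v (c • x k)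
        rw [this, real_inner_smul_right, norm_smul]
        have : et k = ⟪v, x k⟫ := het k
        rw [← this]
        have hns : (‖c • x k‖ : ℝ) = |c| * ‖x k‖ := by
          rw [norm_smul, Real.norm_eq_abs]
        have hcc : (‖c‖ * ‖x k‖) ^ 2 = c ^ 2 * ‖x k‖ ^ 2 := by
          rw [mul_pow, Real.norm_eq_abs, sq_abs]
        linarith
      calc ‖v - c • x k‖ = Real.sqrt (‖v - c • x k‖ ^ 2) := by
            rw [Real.sqrt_sq (norm_nonneg _)]
        _ ≤ Real.sqrt (‖v‖ ^ 2) := Real.sqrt_le_sqrt hsq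
        _ = ‖v‖ := Real.sqrt_sq (norm_nonneg _)
    · exact le_refl _
  intro K
  induction K with
  | zero => exact le_refl _
  | succ k ih => exact le_trans (step k) ih
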